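/- arXiv:1803.06601 — 2 statements merged into one kernel-verified Lean document; each statement's English description precedes it below -/
import Mathlib

section
/- Fix d ≥ 1, a Schwartz function ξ : ℝ → ℂᵈ, a norm ‖·‖ on ℝ², reals 0 < ð₋ < ð₊, and a continuous function r : {ð ∈ ℝ : ð₋ ≤ |ð| ≤ ð₊} → ℝ \ {0}; form ω_{x,y,t,ð} using the dilation parameter r(ð). Then there exists M > 0 such that for all (x,y) ∈ ℝ² with ‖(x,y)‖ = 1, all ð with ð₋ ≤ |ð| ≤ ð₊, all t ∈ [0,1] and all s ∈ ℝ, one has ‖ω_{x,y,t,ð}(s)‖_{ℂᵈ} ≤ M/(1 + s²). -/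
set_option maxHeartbeats 1000000

lemma aux_sq (s h H : ℝ) (hH : |h| ≤ H) : 1 + s^2 ≤ 2*(1+H^2)*(1+(s+h)^2) := by
  have h2 : h^2 ≤ H^2 := by
    have := abs_nonneg h
    nlinarith [sq_abs h]
  nlinarith [sq_nonneg (s+2*h), sq_nonneg ((s+h)*h), sq_nonneg (s+h)]

lemma aux_abs (s h H : ℝ) (hH : |h| ≤ H) : 1 + |s| ≤ (1+H)*(1+|s+h|) := by
  have h1 : |s| ≤ |s+h| + |h| := by
    calc |s| = |(s+h) + (-h)| := by ring_nf
    _ ≤ |s+h| + |(-h)| := abs_add_le _ _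
    _ = |s+h| + |h| := by rw [abs_neg]
  have h0 : (0:ℝ) ≤ |h| := abs_nonneg h
  have h3 : (0:ℝ) ≤ |s+h| := abs_nonneg _
  nlinarith

lemma aux_decay {d : ℕ} (f : SchwartzMap ℝ (EuclideanSpace ℂ (Fin d))) :
    ∃ C, 0 < C ∧ ∀ u : ℝ, (1+|u|)^3 * ‖f u‖ ≤ C := by
  obtain ⟨C0, hC0p, hC0⟩ := f.decay 0 0
  obtain ⟨C3, hC3p, hC3⟩ := f.decay 3 0
  refine ⟨4*(C0+C3), by positivity, fun u => ?_⟩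
  have h0 := hC0 u
  have h3 := hC3 u
  rw [norm_iteratedFDeriv_zero] at h0 h3
  simp only [pow_zero, one_mul, Real.norm_eq_abs] at h0 h3
  have hu : (0:ℝ) ≤ |u| := abs_nonneg u
  have hn : (0:ℝ) ≤ ‖f u‖ := norm_nonneg _
  have key : (1+|u|)^3 ≤ 4*(1+|u|^3) := by nlinarith [sq_nonneg (|u|-1), sq_nonneg |u|]
  nlinarith [mul_le_mul_of_nonneg_right key hn]

lemma aux_exp (θ : ℝ) : ‖Complex.exp (Real.pi * Complex.I * θ) - 1‖ ≤ Real.pi * |θ| := by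
  set f : ℝ → ℂ := fun τ => Complex.exp (Real.pi * Complex.I * θ * τ) with hf
  have hder : ∀ τ : ℝ, HasDerivAt f (Complex.exp (Real.pi * Complex.I * θ * τ) *
      (Real.pi * Complex.I * θ)) τ := by
    intro τ
    have h1 : HasDerivAt (fun τ : ℝ => ((τ : ℝ) : ℂ)) 1 τ := by
      exact Complex.ofRealCLM.hasDerivAt (x := τ)
    have h2 : HasDerivAt (fun τ : ℝ => (Real.pi * Complex.I * θ) * (τ:ℂ))
        (Real.pi * Complex.I * θ) τ := by
      simpa using h1.const_mul (Real.pi * Complex.I * (θ:ℂ))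
    exact h2.cexp
  have hbound : ∀ τ ∈ Set.Ico (0:ℝ) 1,
      ‖Complex.exp (Real.pi * Complex.I * θ * τ) * (Real.pi * Complex.I * θ)‖ ≤ Real.pi * |θ| := by
    intro τ _
    rw [norm_mul]
    have he : ‖Complex.exp (Real.pi * Complex.I * θ * τ)‖ = 1 := by
      rw [Complex.norm_exp]
      norm_num
    rw [he, one_mul]
    simp [norm_mul, Complex.norm_real, Real.norm_eq_abs, abs_of_nonneg Real.pi_pos.le]
  have := norm_image_sub_le_of_norm_deriv_le_segment_01'
    (f := f) (f' := fun τ : ℝ => Complex.exp (Real.pi * Complex.I * θ * τ) * (Real.pi * Complex.I * θ))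
    (fun τ _ => (hder τ).hasDerivWithinAt) hbound
  simpa [hf] using this

/-- The difference quotient `ω_{x,y,t,ð}(s)` for `t ≠ 0`, extended at `t = 0` by its limit
value `ω_{x,y,0,ð}(s) = (i·x·s/ð)·ξ(r·s) + (y·r/(2π))·ξ'(r·s)`. -/
noncomputable def omegaFn (d : ℕ) (ξ : ℝ → EuclideanSpace ℂ (Fin d)) (r dh x y t s : ℝ) :
    EuclideanSpace ℂ (Fin d) :=
  if t = 0 then
    (Complex.I * (x : ℂ) * (s : ℂ) / (dh : ℂ)) • ξ (r * s) +
      (y * r / (2 * Real.pi)) • deriv ξ (r * s)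
  else
    (((2 * Real.pi * dh * t : ℝ) : ℂ))⁻¹ •
      (Complex.exp (Real.pi * Complex.I * ((t ^ 2 * dh * x * y + 2 * t * x * s : ℝ) : ℂ)) •
          ξ (r * (s + dh * t * y)) - ξ (r * s))

/-- For a Schwartz function ξ, a norm on ℝ², reals 0 < ð₋ < ð₊ and a continuous nonvanishing
dilation parameter `r` on `{ð : ð₋ ≤ |ð| ≤ ð₊}`, there is M > 0 such that for all (x,y) of
norm 1, all ð with ð₋ ≤ |ð| ≤ ð₊, all t ∈ [0,1] and all s ∈ ℝ,
`‖ω_{x,y,t,ð}(s)‖ ≤ M/(1 + s²)`. -/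
theorem stmt9 (d : ℕ) (hd : 1 ≤ d) (ξ : SchwartzMap ℝ (EuclideanSpace ℂ (Fin d)))
    (nrm : Seminorm ℝ (ℝ × ℝ)) (hnrm : ∀ p, nrm p = 0 → p = 0)
    (dhm dhp : ℝ) (h0 : 0 < dhm) (hmp : dhm < dhp)
    (r : ℝ → ℝ) (hrc : ContinuousOn r {dh : ℝ | dhm ≤ |dh| ∧ |dh| ≤ dhp})
    (hr0 : ∀ dh : ℝ, dhm ≤ |dh| → |dh| ≤ dhp → r dh ≠ 0) :
    ∃ M > 0, ∀ x y dh t s : ℝ, nrm (x, y) = 1 → dhm ≤ |dh| → |dh| ≤ dhp →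
      t ∈ Set.Icc (0 : ℝ) 1 →
      ‖omegaFn d (⇑ξ) (r dh) dh x y t s‖ ≤ M / (1 + s ^ 2) := by
  -- upper bound for nrm
  have hub : ∀ p : ℝ × ℝ, nrm p ≤ (nrm (1,0) + nrm (0,1)) * ‖p‖ := by
    intro p
    have hp : p = p.1 • ((1:ℝ),(0:ℝ)) + p.2 • ((0:ℝ),(1:ℝ)) := by
      ext <;> simp
    calc nrm p = nrm (p.1 • ((1:ℝ),(0:ℝ)) + p.2 • ((0:ℝ),(1:ℝ))) := by rw [← hp]
    _ ≤ nrm (p.1 • ((1:ℝ),(0:ℝ))) + nrm (p.2 • ((0:ℝ),(1:ℝ))) := map_add_le_add _ _ _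
    _ = |p.1| * nrm (1,0) + |p.2| * nrm (0,1) := by
        rw [map_smul_eq_mul, map_smul_eq_mul]; rfl
    _ ≤ ‖p‖ * nrm (1,0) + ‖p‖ * nrm (0,1) := by
        have hh1 : |p.1| ≤ ‖p‖ := by simpa using norm_fst_le p
        have hh2 : |p.2| ≤ ‖p‖ := by simpa using norm_snd_le p
        exact add_le_add (mul_le_mul_of_nonneg_right hh1 (apply_nonneg _ _))
          (mul_le_mul_of_nonneg_right hh2 (apply_nonneg _ _))
    _ = (nrm (1,0) + nrm (0,1)) * ‖p‖ := by ring
  have hcont : Continuous fun p : ℝ × ℝ => nrm p := by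
    have hlip : LipschitzWith ((nrm (1,0) + nrm (0,1)).toNNReal)
        (fun p : ℝ × ℝ => nrm p) := by
      apply LipschitzWith.of_dist_le_mul
      intro p q
      rw [Real.dist_eq, dist_eq_norm]
      calc |nrm p - nrm q| = ‖nrm p - nrm q‖ := (Real.norm_eq_abs _).symm
      _ ≤ nrm (p - q) := nrm.norm_sub_map_le_sub p q
      _ ≤ (nrm (1,0) + nrm (0,1)) * ‖p - q‖ := hub _
      _ ≤ ((nrm (1,0) + nrm (0,1)).toNNReal : ℝ) * ‖p - q‖ := by
          gcongr
          exact Real.le_coe_toNNReal _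
    exact hlip.continuous
  -- minimum of nrm on unit sphere
  obtain ⟨p0, hp0s, hp0min⟩ := (isCompact_sphere (0:ℝ×ℝ) 1).exists_isMinOn
    ⟨((1:ℝ),(0:ℝ)), by
      rw [Metric.mem_sphere, dist_zero_right]
      simp [Prod.norm_def]⟩ hcont.continuousOn
  have hm : 0 < nrm p0 := by
    rcases (apply_nonneg nrm p0).lt_or_eq with h | h
    · exact h
    · exfalso
      have hp0 : p0 = 0 := hnrm _ h.symm
      have : ‖p0‖ = 1 := by simpa using hp0s
      rw [hp0] at this; simp at this
  set m := nrm p0 with hmdef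
  set B := m⁻¹ with hBdef
  have hB : 0 < B := inv_pos.2 hm
  have hxyB : ∀ x y : ℝ, nrm (x, y) = 1 → |x| ≤ B ∧ |y| ≤ B := by
    intro x y hxy1
    have hpne : ((x,y) : ℝ×ℝ) ≠ 0 := by
      intro h
      rw [h, map_zero] at hxy1
      norm_num at hxy1
    have hnp : 0 < ‖((x,y) : ℝ×ℝ)‖ := norm_pos_iff.2 hpne
    have hmem : (‖((x,y):ℝ×ℝ)‖⁻¹ • ((x,y):ℝ×ℝ)) ∈ Metric.sphere (0:ℝ×ℝ) 1 := by
      rw [Metric.mem_sphere, dist_zero_right, norm_smul, Real.norm_eq_abs,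
        abs_of_pos (inv_pos.2 hnp), inv_mul_cancel₀ hnp.ne']
    have h1 : m ≤ nrm (‖((x,y):ℝ×ℝ)‖⁻¹ • ((x,y):ℝ×ℝ)) := hp0min hmem
    rw [map_smul_eq_mul, hxy1, mul_one, Real.norm_eq_abs, abs_of_pos (inv_pos.2 hnp)] at h1
    have h2 : ‖((x,y):ℝ×ℝ)‖ ≤ B := by
      rw [hBdef]
      have h5 : m * ‖((x,y):ℝ×ℝ)‖ ≤ 1 := by
        calc m * ‖((x,y):ℝ×ℝ)‖ ≤ ‖((x,y):ℝ×ℝ)‖⁻¹ * ‖((x,y):ℝ×ℝ)‖ :=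
              mul_le_mul_of_nonneg_right h1 hnp.le
        _ = 1 := inv_mul_cancel₀ hnp.ne'
      have hmm : m * m⁻¹ = 1 := mul_inv_cancel₀ hm.ne'
      nlinarith
    constructor
    · exact le_trans (by simpa using norm_fst_le ((x,y):ℝ×ℝ)) h2
    · exact le_trans (by simpa using norm_snd_le ((x,y):ℝ×ℝ)) h2
  -- bounds for r on the compact annulus
  set K : Set ℝ := {dh : ℝ | dhm ≤ |dh| ∧ |dh| ≤ dhp} with hKdef
  have hKc : IsCompact K := by
    have h1 : K = abs ⁻¹' Set.Icc dhm dhp := by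
      ext z; simp [hKdef, Set.mem_Icc]
    have hcl : IsClosed K := by rw [h1]; exact isClosed_Icc.preimage continuous_abs
    have hsub : K ⊆ Set.Icc (-dhp) dhp := by
      intro z hz
      exact Set.mem_Icc.2 (abs_le.1 hz.2)
    exact isCompact_Icc.of_isClosed_subset hcl hsub
  have hKne : K.Nonempty := by
    refine ⟨dhp, ?_⟩
    have habsp : |dhp| = dhp := abs_of_pos (h0.trans hmp)
    simp only [hKdef, Set.mem_setOf_eq, habsp]
    exact ⟨hmp.le, le_rfl⟩
  have habs : ContinuousOn (fun z => |r z|) K := continuous_abs.comp_continuousOn hrc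
  obtain ⟨z1, hz1K, hz1⟩ := hKc.exists_isMinOn hKne habs
  obtain ⟨z2, hz2K, hz2⟩ := hKc.exists_isMaxOn hKne habs
  set rmin := |r z1| with hrmindef
  set rmax := |r z2| with hrmaxdef
  have hrminpos : 0 < rmin := abs_pos.2 (hr0 z1 hz1K.1 hz1K.2)
  have hrmaxpos : 0 < rmax := abs_pos.2 (hr0 z2 hz2K.1 hz2K.2)
  have hrlb : ∀ dh ∈ K, rmin ≤ |r dh| := fun dh hdh => hz1 hdh
  have hrub : ∀ dh ∈ K, |r dh| ≤ rmax := fun dh hdh => hz2 hdh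
  -- Schwartz decay
  obtain ⟨CX, hCXp, hCX⟩ := aux_decay ξ
  obtain ⟨CD, hCDp, hCD⟩ := aux_decay (SchwartzMap.derivCLM ℝ (EuclideanSpace ℂ (Fin d)) ξ)
  have hCD' : ∀ u : ℝ, (1+|u|)^3 * ‖deriv (⇑ξ) u‖ ≤ CD := by
    intro u
    have := hCD u
    rwa [SchwartzMap.derivCLM_apply] at this
  set c0 := min rmin 1 with hc0def
  have hc0p : 0 < c0 := lt_min hrminpos one_pos
  set KX := CX / c0^3 with hKXdef
  set KD := CD / c0^3 with hKDdef
  have hKXp : 0 < KX := by positivity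
  have hKDp : 0 < KD := by positivity
  have hscale : ∀ dh ∈ K, ∀ w : ℝ, (c0*(1+|w|))^3 ≤ (1+|r dh * w|)^3 := by
    intro dh hdh w
    have h1 : c0 * (1+|w|) ≤ 1 + |r dh * w| := by
      rw [abs_mul]
      have h2 : c0 ≤ 1 := min_le_right _ _
      have h3 : c0 ≤ |r dh| := le_trans (min_le_left _ _) (hrlb dh hdh)
      have h4 : (0:ℝ) ≤ |w| := abs_nonneg w
      nlinarith
    exact pow_le_pow_left₀ (by positivity) h1 3
  have hXbd : ∀ dh ∈ K, ∀ w : ℝ, (1+|w|)^3 * ‖ξ (r dh * w)‖ ≤ KX := by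
    intro dh hdh w
    have h1 := hscale dh hdh w
    have h2 := hCX (r dh * w)
    have hn : (0:ℝ) ≤ ‖ξ (r dh * w)‖ := norm_nonneg _
    rw [hKXdef, le_div_iff₀ (by positivity)]
    calc (1+|w|)^3 * ‖ξ (r dh * w)‖ * c0^3
        = (c0*(1+|w|))^3 * ‖ξ (r dh * w)‖ := by ring
      _ ≤ (1+|r dh * w|)^3 * ‖ξ (r dh * w)‖ := by gcongr
      _ ≤ CX := h2
  have hDbd : ∀ dh ∈ K, ∀ w : ℝ, (1+|w|)^3 * ‖deriv (⇑ξ) (r dh * w)‖ ≤ KD := by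
    intro dh hdh w
    have h1 := hscale dh hdh w
    have h2 := hCD' (r dh * w)
    have hn : (0:ℝ) ≤ ‖deriv (⇑ξ) (r dh * w)‖ := norm_nonneg _
    rw [hKDdef, le_div_iff₀ (by positivity)]
    calc (1+|w|)^3 * ‖deriv (⇑ξ) (r dh * w)‖ * c0^3
        = (c0*(1+|w|))^3 * ‖deriv (⇑ξ) (r dh * w)‖ := by ring
      _ ≤ (1+|r dh * w|)^3 * ‖deriv (⇑ξ) (r dh * w)‖ := by gcongr
      _ ≤ CD := h2
  -- constants
  have hdhppos : 0 < dhp := h0.trans hmp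
  set H := dhp * B with hHdef
  have hHp : 0 < H := mul_pos hdhppos hB
  set M0 := B/dhm * KX + B * rmax * KD with hM0def
  set M1 := (dhp*B^2+2*B)/(2*dhm) * (2*(1+H)*(1+H^2)*KX) with hM1def
  set M2 := rmax*B*(1+H^2)*KD with hM2def
  have hM0p : 0 < M0 :=
    add_pos (mul_pos (div_pos hB h0) hKXp) (mul_pos (mul_pos hB hrmaxpos) hKDp)
  have hM1p : 0 < M1 := by
    apply mul_pos
    · apply div_pos
      · nlinarith only [hdhppos, hB]
      · linarith only [h0]
    · have : (0:ℝ) < 1 + H := by linarith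
      have : (0:ℝ) < 1 + H^2 := by positivity
      positivity
  have hM2p : 0 < M2 := by
    have : (0:ℝ) < 1 + H^2 := by positivity
    apply mul_pos (mul_pos (mul_pos hrmaxpos hB) this) hKDp
  refine ⟨M0 + M1 + M2 + 1, by linarith, ?_⟩
  intro x y dh t s hxy h2 h3 ht
  obtain ⟨hx, hy⟩ := hxyB x y hxy
  have hdhK : dh ∈ K := ⟨h2, h3⟩
  have hP : (0:ℝ) < 1 + s^2 := by positivity
  have hdhpos : 0 < |dh| := lt_of_lt_of_le h0 h2
  by_cases htz : t = 0
  · subst htz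
    unfold omegaFn
    rw [if_pos rfl, le_div_iff₀ hP]
    have hra : |r dh| ≤ rmax := hrub dh hdhK
    have hc1 : ‖(Complex.I * (x:ℂ) * (s:ℂ) / (dh:ℂ))‖ = |x| * |s| / |dh| := by
      simp [norm_div, norm_mul, Complex.norm_real, Real.norm_eq_abs]
    have hc2 : ‖(y * r dh / (2 * Real.pi))‖ = |y| * |r dh| / (2 * Real.pi) := by
      rw [Real.norm_eq_abs, abs_div, abs_mul, abs_of_pos (by positivity : (0:ℝ) < 2*Real.pi)]
    have hcube : (1+s^2) ≤ (1+|s|)^3 := by nlinarith only [abs_nonneg s, sq_abs s]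
    have hXs : |s| * ((1+s^2) * ‖ξ (r dh * s)‖) ≤ KX := by
      have h1 := hXbd dh hdhK s
      have h2 : |s| * (1+s^2) ≤ (1+|s|)^3 := by nlinarith only [abs_nonneg s, sq_abs s]
      calc |s| * ((1+s^2) * ‖ξ (r dh * s)‖) = (|s| * (1+s^2)) * ‖ξ (r dh * s)‖ := by ring
      _ ≤ (1+|s|)^3 * ‖ξ (r dh * s)‖ := mul_le_mul_of_nonneg_right h2 (norm_nonneg _)
      _ ≤ KX := h1
    have hDs : (1+s^2) * ‖deriv (⇑ξ) (r dh * s)‖ ≤ KD := by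
      have h1 := hDbd dh hdhK s
      calc (1+s^2) * ‖deriv (⇑ξ) (r dh * s)‖
          ≤ (1+|s|)^3 * ‖deriv (⇑ξ) (r dh * s)‖ :=
            mul_le_mul_of_nonneg_right hcube (norm_nonneg _)
      _ ≤ KD := h1
    have hpi1 : (1:ℝ) ≤ 2 * Real.pi := by nlinarith only [Real.pi_gt_three]
    have key := norm_add_le ((Complex.I * (x:ℂ) * (s:ℂ) / (dh:ℂ)) • ξ (r dh * s))
      ((y * r dh / (2 * Real.pi)) • deriv (⇑ξ) (r dh * s))
    rw [norm_smul, norm_smul, hc1, hc2] at key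
    have t1 : |x| * |s| / |dh| * ‖ξ (r dh * s)‖ * (1+s^2) ≤ B/dhm * KX := by
      have e : |x| * |s| / |dh| * ‖ξ (r dh * s)‖ * (1+s^2)
          = (|x|/|dh|) * (|s| * ((1+s^2) * ‖ξ (r dh * s)‖)) := by ring
      rw [e]
      have h4 : |x|/|dh| ≤ B/dhm := div_le_div₀ hB.le hx h0 h2
      exact mul_le_mul h4 hXs (by positivity) (by positivity)
    have t2 : |y| * |r dh| / (2 * Real.pi) * ‖deriv (⇑ξ) (r dh * s)‖ * (1+s^2) ≤ B * rmax * KD := by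
      have e : |y| * |r dh| / (2 * Real.pi) * ‖deriv (⇑ξ) (r dh * s)‖ * (1+s^2)
          = (|y| * |r dh|/(2 * Real.pi)) * ((1+s^2) * ‖deriv (⇑ξ) (r dh * s)‖) := by ring
      rw [e]
      have h4 : |y| * |r dh|/(2 * Real.pi) ≤ B*rmax := by
        have h5 : |y| * |r dh| ≤ B*rmax := mul_le_mul hy hra (abs_nonneg _) hB.le
        have h6 := div_le_self (by positivity : (0:ℝ) ≤ |y| * |r dh|) hpi1
        linarith only [h5, h6]
      exact mul_le_mul h4 hDs (by positivity) (by positivity)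
    have step := mul_le_mul_of_nonneg_right key hP.le
    nlinarith only [t1, t2, hM1p, hM2p, step, hM0def]
  · have htpos : 0 < t := lt_of_le_of_ne ht.1 (Ne.symm htz)
    have ht0 : (0:ℝ) ≤ t := ht.1
    have ht1 : t ≤ 1 := ht.2
    have hra2 : |r dh| ≤ rmax := hrub dh hdhK
    have hpi : (1:ℝ) ≤ Real.pi := by nlinarith only [Real.pi_gt_three]
    unfold omegaFn
    rw [if_neg htz, le_div_iff₀ hP]
    set h := dh * t * y with hhdef
    set θ := t^2*dh*x*y + 2*t*x*s with hθdef
    have hhH : |h| ≤ H := by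
      rw [hhdef, abs_mul, abs_mul, abs_of_nonneg ht0]
      calc |dh| * t * |y| ≤ dhp * 1 * B := by
            apply mul_le_mul (mul_le_mul h3 ht1 ht0 hdhppos.le) hy (abs_nonneg y)
            nlinarith only [hdhppos]
      _ = H := by rw [hHdef]; ring
    have hQ0 : (0:ℝ) ≤ dhp*B^2+2*B := by nlinarith only [hdhppos, hB]
    -- bound on θ
    have hθQ : |θ| ≤ t*(dhp*B^2+2*B)*(1+|s|) := by
      have hA1 : t* |dh| ≤ 1*dhp := mul_le_mul ht1 h3 (abs_nonneg dh) zero_le_one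
      have hA2 : t* |dh| * |x| ≤ 1*dhp*B :=
        mul_le_mul hA1 hx (abs_nonneg x) (by linarith only [hdhppos])
      have hA3 : t* |dh| * |x| * |y| ≤ 1*dhp*B*B :=
        mul_le_mul hA2 hy (abs_nonneg y) (by nlinarith only [hdhppos, hB])
      have hA4 : t*(t* |dh| * |x| * |y|) ≤ t*(1*dhp*B*B) := mul_le_mul_of_nonneg_left hA3 ht0
      have hA5 : t* |x| ≤ t*B := mul_le_mul_of_nonneg_left hx ht0
      have hA6 : t* |x| * |s| ≤ t*B* |s| := mul_le_mul_of_nonneg_right hA5 (abs_nonneg s)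
      have h7 := abs_add_le (t^2*dh*x*y) (2*t*x*s)
      have e1 : |t^2*dh*x*y| = t*(t* |dh| * |x| * |y|) := by
        rw [abs_mul, abs_mul, abs_mul, abs_of_nonneg (sq_nonneg t)]; ring
      have e2 : |2*t*x*s| = 2*(t* |x| * |s|) := by
        rw [abs_mul, abs_mul, abs_mul, abs_of_nonneg ht0]
        norm_num; ring
      rw [e1, e2] at h7
      have q1 : (0:ℝ) ≤ t*(dhp*B*B)* |s| :=
        mul_nonneg (mul_nonneg ht0 (mul_pos (mul_pos hdhppos hB) hB).le) (abs_nonneg s)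
      have q2 : (0:ℝ) ≤ t*B := mul_nonneg ht0 hB.le
      rw [← hθdef] at h7
      nlinarith only [h7, hA4, hA6, q1, q2]
    -- decay bound for ξ at shifted point
    have hXb : ‖ξ (r dh * (s+h))‖ * ((1+|s|)*(1+s^2)) ≤ 2*(1+H)*(1+H^2)*KX := by
      have hbd := hXbd dh hdhK (s+h)
      have l1 := aux_sq s h H hhH
      have l2 := aux_abs s h H hhH
      have hcube2 : (1+|s+h|)*(1+(s+h)^2) ≤ (1+|s+h|)^3 := by
        nlinarith only [abs_nonneg (s+h), sq_abs (s+h)]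
      have hnn : (0:ℝ) ≤ 2*(1+H)*(1+H^2) := by nlinarith only [hHp]
      have comb : (1+|s|)*(1+s^2) ≤ 2*(1+H)*(1+H^2)*(1+|s+h|)^3 := by
        calc (1+|s|)*(1+s^2) ≤ ((1+H)*(1+|s+h|)) * (2*(1+H^2)*(1+(s+h)^2)) := by
              apply mul_le_mul l2 l1 (by positivity) (by nlinarith only [hHp, abs_nonneg (s+h)])
        _ = 2*(1+H)*(1+H^2)*((1+|s+h|)*(1+(s+h)^2)) := by ring
        _ ≤ 2*(1+H)*(1+H^2)*(1+|s+h|)^3 := mul_le_mul_of_nonneg_left hcube2 hnn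
      calc ‖ξ (r dh * (s+h))‖ * ((1+|s|)*(1+s^2))
          ≤ ‖ξ (r dh * (s+h))‖ * (2*(1+H)*(1+H^2)*(1+|s+h|)^3) :=
            mul_le_mul_of_nonneg_left comb (norm_nonneg _)
      _ = 2*(1+H)*(1+H^2)*((1+|s+h|)^3*‖ξ (r dh * (s+h))‖) := by ring
      _ ≤ 2*(1+H)*(1+H^2)*KX := mul_le_mul_of_nonneg_left hbd hnn
    -- mean value bound for the difference
    have hnn2 : (0:ℝ) ≤ 2*(1+H^2) := by nlinarith only [hHp]
    have hseg : ∀ τ ∈ Set.Ico (0:ℝ) 1,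
        ‖(r dh * h) • deriv (⇑ξ) (r dh * s + r dh * h * τ)‖
          ≤ |r dh * h| * (2*(1+H^2)*KD / (1+s^2)) := by
      intro τ hτ
      rw [norm_smul, Real.norm_eq_abs]
      apply mul_le_mul_of_nonneg_left ?_ (abs_nonneg _)
      have e3 : r dh * s + r dh * h * τ = r dh * (s + τ*h) := by ring
      rw [e3, le_div_iff₀ hP]
      have hbd := hDbd dh hdhK (s+τ*h)
      have hth : |τ*h| ≤ H := by
        rw [abs_mul, abs_of_nonneg hτ.1]
        calc τ* |h| ≤ 1* |h| := mul_le_mul_of_nonneg_right hτ.2.le (abs_nonneg h)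
        _ = |h| := one_mul _
        _ ≤ H := hhH
      have l1 := aux_sq s (τ*h) H hth
      have hcube3 : (1+(s+τ*h)^2) ≤ (1+|s+τ*h|)^3 := by
        nlinarith only [abs_nonneg (s+τ*h), sq_abs (s+τ*h)]
      calc ‖deriv (⇑ξ) (r dh*(s+τ*h))‖ * (1+s^2)
          ≤ ‖deriv (⇑ξ) (r dh*(s+τ*h))‖ * (2*(1+H^2)*(1+(s+τ*h)^2)) :=
            mul_le_mul_of_nonneg_left l1 (norm_nonneg _)
        _ = 2*(1+H^2)*((1+(s+τ*h)^2)*‖deriv (⇑ξ) (r dh*(s+τ*h))‖) := by ring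
        _ ≤ 2*(1+H^2)*((1+|s+τ*h|)^3*‖deriv (⇑ξ) (r dh*(s+τ*h))‖) :=
            mul_le_mul_of_nonneg_left
              (mul_le_mul_of_nonneg_right hcube3 (norm_nonneg _)) hnn2
        _ ≤ 2*(1+H^2)*KD := mul_le_mul_of_nonneg_left hbd hnn2
    have hder2 : ∀ τ ∈ Set.Icc (0:ℝ) 1,
        HasDerivWithinAt (fun τ : ℝ => ξ (r dh * s + r dh * h * τ))
          ((r dh * h) • deriv (⇑ξ) (r dh * s + r dh * h * τ)) (Set.Icc 0 1) τ := by
      intro τ _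
      have hin : HasDerivAt (fun τ : ℝ => r dh * s + r dh * h * τ) (r dh * h) τ := by
        simpa using ((hasDerivAt_id τ).const_mul (r dh * h)).const_add (r dh * s)
      have hout : HasDerivAt (⇑ξ) (deriv (⇑ξ) (r dh * s + r dh * h * τ))
          (r dh * s + r dh * h * τ) := (ξ.differentiableAt).hasDerivAt
      exact (HasDerivAt.scomp (x := τ) hout hin).hasDerivWithinAt
    have hMVT := norm_image_sub_le_of_norm_deriv_le_segment_01' hder2 hseg
    have hdiffb : ‖ξ (r dh * (s+h)) - ξ (r dh * s)‖
        ≤ |r dh * h| * (2*(1+H^2)*KD/(1+s^2)) := by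
      have e4 : r dh * s + r dh * h * 1 = r dh * (s+h) := by ring
      have e5 : r dh * s + r dh * h * 0 = r dh * s := by ring
      rw [e4, e5] at hMVT
      exact hMVT
    -- assemble
    have hnormscalar : ‖(((2*Real.pi*dh*t : ℝ):ℂ))⁻¹‖ = (2*Real.pi* |dh| *t)⁻¹ := by
      rw [norm_inv, Complex.norm_real, Real.norm_eq_abs, abs_mul, abs_mul,
        abs_of_pos (by positivity : (0:ℝ) < 2*Real.pi), abs_of_pos htpos]
    have hcpos : (0:ℝ) < 2*Real.pi* |dh| *t :=
      mul_pos (mul_pos (by positivity) hdhpos) htpos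
    have hEsplit : ‖Complex.exp (Real.pi * Complex.I * (θ:ℂ)) • ξ (r dh * (s+h)) - ξ (r dh * s)‖
        ≤ ‖Complex.exp (Real.pi * Complex.I * (θ:ℂ)) - 1‖ * ‖ξ (r dh * (s+h))‖
          + ‖ξ (r dh * (s+h)) - ξ (r dh * s)‖ := by
      have e6 : Complex.exp (Real.pi * Complex.I * (θ:ℂ)) • ξ (r dh * (s+h)) - ξ (r dh * s)
          = (Complex.exp (Real.pi * Complex.I * (θ:ℂ)) - 1) • ξ (r dh * (s+h))
            + (ξ (r dh * (s+h)) - ξ (r dh * s)) := by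
        rw [sub_smul, one_smul]; abel
      rw [e6]
      refine (norm_add_le _ _).trans ?_
      rw [norm_smul]
    have hexp := aux_exp θ
    -- key product bounds
    have P1 : ‖Complex.exp (Real.pi * Complex.I * (θ:ℂ)) - 1‖ * ‖ξ (r dh * (s+h))‖ * (1+s^2)
        ≤ M1 * (2*Real.pi* |dh| *t) := by
      have hEb : ‖Complex.exp (Real.pi * Complex.I * (θ:ℂ)) - 1‖
          ≤ Real.pi*(t*(dhp*B^2+2*B)*(1+|s|)) :=
        le_trans hexp (mul_le_mul_of_nonneg_left hθQ Real.pi_pos.le)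
      have hnn3 : (0:ℝ) ≤ Real.pi*t*(dhp*B^2+2*B) :=
        mul_nonneg (mul_nonneg Real.pi_pos.le ht0) hQ0
      calc ‖Complex.exp (Real.pi * Complex.I * (θ:ℂ)) - 1‖ * ‖ξ (r dh * (s+h))‖ * (1+s^2)
          ≤ (Real.pi*(t*(dhp*B^2+2*B)*(1+|s|))) * ‖ξ (r dh * (s+h))‖ * (1+s^2) := by
            apply mul_le_mul_of_nonneg_right
              (mul_le_mul_of_nonneg_right hEb (norm_nonneg _)) hP.le
        _ = (Real.pi*t*(dhp*B^2+2*B)) * (‖ξ (r dh * (s+h))‖ * ((1+|s|)*(1+s^2))) := by ring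
        _ ≤ (Real.pi*t*(dhp*B^2+2*B)) * (2*(1+H)*(1+H^2)*KX) :=
            mul_le_mul_of_nonneg_left hXb hnn3
        _ ≤ M1 * (2*Real.pi* |dh| *t) := by
            rw [hM1def]
            have hge : (1:ℝ) ≤ |dh|/dhm := (one_le_div h0).2 h2
            have hGnn : (0:ℝ) ≤ (dhp*B^2+2*B)*(2*(1+H)*(1+H^2)*KX)*Real.pi*t :=
              mul_nonneg (mul_nonneg (mul_nonneg hQ0
                (mul_nonneg (mul_nonneg (by nlinarith only [hHp] : (0:ℝ) ≤ 2*(1+H))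
                  (by nlinarith only [sq_nonneg H] : (0:ℝ) ≤ 1+H^2)) hKXp.le))
                Real.pi_pos.le) ht0
            calc Real.pi*t*(dhp*B^2+2*B) * (2*(1+H)*(1+H^2)*KX)
                = ((dhp*B^2+2*B)*(2*(1+H)*(1+H^2)*KX)*Real.pi*t)*1 := by ring
              _ ≤ ((dhp*B^2+2*B)*(2*(1+H)*(1+H^2)*KX)*Real.pi*t)*(|dh|/dhm) :=
                  mul_le_mul_of_nonneg_left hge hGnn
              _ = (dhp*B^2+2*B)/(2*dhm)*(2*(1+H)*(1+H^2)*KX)*(2*Real.pi* |dh| *t) := by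
                  field_simp
    have P2 : ‖ξ (r dh * (s+h)) - ξ (r dh * s)‖ * (1+s^2) ≤ M2 * (2*Real.pi* |dh| *t) := by
      have hrh : |r dh * h| ≤ rmax * (|dh| *t*B) := by
        rw [abs_mul, hhdef, abs_mul, abs_mul, abs_of_nonneg ht0]
        apply mul_le_mul hra2
          (mul_le_mul_of_nonneg_left hy (mul_nonneg (abs_nonneg dh) ht0))
          (by positivity) hrmaxpos.le
      have hnn4 : (0:ℝ) ≤ 2*(1+H^2)*KD :=
        mul_nonneg (by nlinarith only [sq_nonneg H] : (0:ℝ) ≤ 2*(1+H^2)) hKDp.le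
      calc ‖ξ (r dh * (s+h)) - ξ (r dh * s)‖ * (1+s^2)
          ≤ (|r dh * h| * (2*(1+H^2)*KD/(1+s^2))) * (1+s^2) :=
            mul_le_mul_of_nonneg_right hdiffb hP.le
        _ = |r dh * h| * (2*(1+H^2)*KD) := by
            rw [mul_assoc, div_mul_cancel₀ _ (ne_of_gt hP)]
        _ ≤ (rmax * (|dh| *t*B)) * (2*(1+H^2)*KD) :=
            mul_le_mul_of_nonneg_right hrh hnn4
        _ ≤ M2 * (2*Real.pi* |dh| *t) := by
            rw [hM2def]
            have hmono : (0:ℝ) ≤ rmax*B*(1+H^2)*KD*(|dh| *t) :=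
              mul_nonneg (mul_nonneg (mul_nonneg (mul_nonneg hrmaxpos.le hB.le)
                (by positivity)) hKDp.le) (mul_nonneg (abs_nonneg dh) ht0)
            nlinarith only [hpi, hmono]
    rw [norm_smul, hnormscalar]
    calc (2*Real.pi* |dh| *t)⁻¹
          * ‖Complex.exp (Real.pi * Complex.I * (θ:ℂ)) • ξ (r dh * (s+h)) - ξ (r dh * s)‖
          * (1+s^2)
        ≤ (2*Real.pi* |dh| *t)⁻¹
            * (‖Complex.exp (Real.pi * Complex.I * (θ:ℂ)) - 1‖ * ‖ξ (r dh * (s+h))‖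
              + ‖ξ (r dh * (s+h)) - ξ (r dh * s)‖) * (1+s^2) := by
          apply mul_le_mul_of_nonneg_right
            (mul_le_mul_of_nonneg_left hEsplit (inv_nonneg.2 hcpos.le)) hP.le
      _ = ((‖Complex.exp (Real.pi * Complex.I * (θ:ℂ)) - 1‖ * ‖ξ (r dh * (s+h))‖ * (1+s^2))
            + (‖ξ (r dh * (s+h)) - ξ (r dh * s)‖ * (1+s^2))) / (2*Real.pi* |dh| *t) := by
          ring
      _ ≤ ((M1 * (2*Real.pi* |dh| *t)) + (M2 * (2*Real.pi* |dh| *t))) / (2*Real.pi* |dh| *t) := by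
          exact (div_le_div_iff_of_pos_right hcpos).2 (add_le_add P1 P2)
      _ = M1 + M2 := by
          field_simp
      _ ≤ M0+M1+M2+1 := by linarith only [hM0p]
end

section
/- Fix d ≥ 1, a Schwartz function ξ : ℝ → ℂᵈ, a norm ‖·‖ on ℝ², reals 0 < ð₋ < ð₊, and a continuous function r : {ð ∈ ℝ : ð₋ ≤ |ð| ≤ ð₊} → ℝ \ {0}; form ω_{x,y,t,ð} using the dilation parameter r(ð). Then the map (x, y, t, ð, s) ↦ ω_{x,y,t,ð}(s) is jointly continuous on the set {(x,y,t,ð) : ‖(x,y)‖ = 1, t ∈ [0,1], ð₋ ≤ |ð| ≤ ð₊} × ℝ (with the value at t = 0 given by ω_{x,y,0,ð}(s)). -/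
open MeasureTheory Complex

noncomputable def PhiAux (z : ℂ) : ℂ := ∫ σ in (0:ℝ)..1, Complex.exp (σ * z)

lemma PhiAux_cont : Continuous PhiAux := by
  have : Continuous (Function.uncurry fun (z : ℂ) (σ : ℝ) => Complex.exp (σ * z)) := by
    fun_prop
  exact intervalIntegral.continuous_parametric_intervalIntegral_of_continuous' this 0 1

lemma PhiAux_spec (z : ℂ) : z * PhiAux z = Complex.exp z - 1 := by
  have h : ∀ σ ∈ Set.uIcc (0:ℝ) 1,
      HasDerivAt (fun σ : ℝ => Complex.exp (σ * z)) (Complex.exp (σ * z) * z) σ := by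
    intro σ _
    simpa using (((hasDerivAt_id σ).ofReal_comp.mul_const z)).cexp
  have hint : IntervalIntegrable (fun σ : ℝ => Complex.exp (σ * z) * z) volume 0 1 := by
    apply Continuous.intervalIntegrable; fun_prop
  have := intervalIntegral.integral_eq_sub_of_hasDerivAt h hint
  simp only [Complex.ofReal_one, Complex.ofReal_zero, one_mul, zero_mul, Complex.exp_zero] at this
  rw [PhiAux, ← intervalIntegral.integral_const_mul,
    intervalIntegral.integral_congr (g := fun σ : ℝ => Complex.exp (σ * z) * z)
      (fun σ _ => mul_comm z _), this]

lemma PhiAux_zero : PhiAux 0 = 1 := by simp [PhiAux]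

noncomputable def PsiAux {d : ℕ} (f : ℝ → EuclideanSpace ℂ (Fin d)) (p : ℝ × ℝ) :
    EuclideanSpace ℂ (Fin d) := ∫ σ in (0:ℝ)..1, deriv f (p.1 + σ * p.2)

lemma PsiAux_cont {d : ℕ} (f : ℝ → EuclideanSpace ℂ (Fin d)) (hf : Continuous (deriv f)) :
    Continuous (PsiAux f) := by
  have : Continuous
      (Function.uncurry fun (p : ℝ × ℝ) (σ : ℝ) => deriv f (p.1 + σ * p.2)) := by fun_prop
  exact intervalIntegral.continuous_parametric_intervalIntegral_of_continuous' this 0 1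

lemma PsiAux_spec {d : ℕ} (f : ℝ → EuclideanSpace ℂ (Fin d)) (hf : ContDiff ℝ 1 f) (u h : ℝ) :
    h • PsiAux f (u, h) = f (u + h) - f u := by
  have hd : ∀ σ ∈ Set.uIcc (0:ℝ) 1,
      HasDerivAt (fun σ : ℝ => f (u + σ * h)) (h • deriv f (u + σ * h)) σ := by
    intro σ _
    have h1 : HasDerivAt (fun σ : ℝ => u + σ * h) h σ := by
      simpa using ((hasDerivAt_id σ).mul_const h).const_add u
    exact
      (((hf.differentiable one_ne_zero) (u + σ * h)).hasDerivAt.scomp σ h1)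
  have hint : IntervalIntegrable (fun σ : ℝ => h • deriv f (u + σ * h)) volume 0 1 := by
    apply Continuous.intervalIntegrable
    exact continuous_const.fun_smul ((hf.continuous_deriv le_rfl).comp (by fun_prop : Continuous (fun σ : ℝ => u + σ * h)))
  have key := intervalIntegral.integral_eq_sub_of_hasDerivAt hd hint
  simp only [one_mul, zero_mul, add_zero] at key
  rw [PsiAux, ← intervalIntegral.integral_smul, key]

lemma PsiAux_zero {d : ℕ} (f : ℝ → EuclideanSpace ℂ (Fin d)) (u : ℝ) :
    PsiAux f (u, 0) = deriv f u := by simp [PsiAux]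


/-- For a Schwartz function ξ, a norm on ℝ², reals 0 < ð₋ < ð₊ and a continuous nonvanishing
dilation parameter `r` on `{ð : ð₋ ≤ |ð| ≤ ð₊}`, the map `(x, y, t, ð, s) ↦ ω_{x,y,t,ð}(s)`
is jointly continuous on `{(x,y,t,ð) : ‖(x,y)‖ = 1, t ∈ [0,1], ð₋ ≤ |ð| ≤ ð₊} × ℝ`. -/
theorem stmt10 (d : ℕ) (hd : 1 ≤ d) (ξ : SchwartzMap ℝ (EuclideanSpace ℂ (Fin d)))
    (nrm : Seminorm ℝ (ℝ × ℝ)) (hnrm : ∀ p, nrm p = 0 → p = 0)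
    (dhm dhp : ℝ) (h0 : 0 < dhm) (hmp : dhm < dhp)
    (r : ℝ → ℝ) (hrc : ContinuousOn r {dh : ℝ | dhm ≤ |dh| ∧ |dh| ≤ dhp})
    (hr0 : ∀ dh : ℝ, dhm ≤ |dh| → |dh| ≤ dhp → r dh ≠ 0) :
    ContinuousOn
      (fun p : ℝ × ℝ × ℝ × ℝ × ℝ =>
        omegaFn d (⇑ξ) (r p.2.2.2.1) p.2.2.2.1 p.1 p.2.1 p.2.2.1 p.2.2.2.2)
      {p : ℝ × ℝ × ℝ × ℝ × ℝ | nrm (p.1, p.2.1) = 1 ∧ p.2.2.1 ∈ Set.Icc (0 : ℝ) 1 ∧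
        dhm ≤ |p.2.2.2.1| ∧ |p.2.2.2.1| ≤ dhp} := by
  have hξ1 : ContDiff ℝ 1 (⇑ξ) := ξ.smooth 1
  have hξd : Continuous (deriv (⇑ξ)) := (ξ.smooth 2).continuous_deriv (by norm_num)
  set S : Set (ℝ × ℝ × ℝ × ℝ × ℝ) :=
    {p : ℝ × ℝ × ℝ × ℝ × ℝ | nrm (p.1, p.2.1) = 1 ∧ p.2.2.1 ∈ Set.Icc (0 : ℝ) 1 ∧
      dhm ≤ |p.2.2.2.1| ∧ |p.2.2.2.1| ≤ dhp} with hS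
  set G : ℝ × ℝ × ℝ × ℝ × ℝ → EuclideanSpace ℂ (Fin d) := fun p =>
    (((2 * Real.pi * p.2.2.2.1 : ℝ) : ℂ))⁻¹ •
      (((Real.pi : ℂ) * Complex.I *
          ((p.2.2.1 * p.2.2.2.1 * p.1 * p.2.1 + 2 * p.1 * p.2.2.2.2 : ℝ) : ℂ) *
          PhiAux ((Real.pi : ℂ) * Complex.I *
            ((p.2.2.1 * (p.2.2.1 * p.2.2.2.1 * p.1 * p.2.1 + 2 * p.1 * p.2.2.2.2) : ℝ) : ℂ))) •
         ξ (r p.2.2.2.1 * (p.2.2.2.2 + p.2.2.2.1 * p.2.2.1 * p.2.1)) +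
       ((r p.2.2.2.1 * p.2.2.2.1 * p.2.1 : ℝ) : ℂ) •
         PsiAux (⇑ξ) (r p.2.2.2.1 * p.2.2.2.2,
           r p.2.2.2.1 * (p.2.2.2.1 * p.2.2.1 * p.2.1))) with hG
  have hGc : ContinuousOn G S := by
    have hRp : ContinuousOn (fun p : ℝ × ℝ × ℝ × ℝ × ℝ => r p.2.2.2.1) S := by
      apply hrc.comp (by fun_prop)
      intro p hp
      exact ⟨hp.2.2.1, hp.2.2.2⟩
    have hdh0 : ∀ p ∈ S, p.2.2.2.1 ≠ 0 := by
      intro p hp h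
      have h1 := hp.2.2.1
      rw [h, abs_zero] at h1
      linarith
    apply ContinuousOn.fun_smul
    · apply ContinuousOn.fun_inv₀
      · exact (Complex.continuous_ofReal.comp (by fun_prop)).continuousOn
      · intro p hp
        simp only [ne_eq, Complex.ofReal_eq_zero]
        have := Real.pi_pos
        have := hdh0 p hp
        positivity
    · apply ContinuousOn.fun_add
      · apply ContinuousOn.fun_smul
        · exact ((continuous_const.mul
            (Complex.continuous_ofReal.comp (by fun_prop))).mul
            (PhiAux_cont.comp (continuous_const.mul
              (Complex.continuous_ofReal.comp (by fun_prop))))).continuousOn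
        · exact ξ.continuous.comp_continuousOn (hRp.mul (by fun_prop))
      · apply ContinuousOn.fun_smul
        · exact Complex.continuous_ofReal.comp_continuousOn
            ((hRp.mul (by fun_prop)).mul (by fun_prop))
        · exact (PsiAux_cont (⇑ξ) hξd).comp_continuousOn
            ((hRp.mul (by fun_prop)).prodMk (hRp.mul (by fun_prop)))
  apply hGc.congr
  rintro ⟨x, y, t, dh, s⟩ hp
  have hdh : dh ≠ 0 := by
    intro h
    have h1 := hp.2.2.1
    rw [h, abs_zero] at h1
    linarith
  have hpi := Real.pi_ne_zero
  have hpiC : (Real.pi : ℂ) ≠ 0 := Complex.ofReal_ne_zero.mpr hpi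
  have hdhC : (dh : ℂ) ≠ 0 := Complex.ofReal_ne_zero.mpr hdh
  simp only [hG, omegaFn]
  by_cases ht : t = 0
  · subst ht
    rw [if_pos rfl]
    simp only [zero_mul, mul_zero, add_zero, zero_add, Complex.ofReal_zero,
      PhiAux_zero, PsiAux_zero, mul_one]
    rw [smul_add, smul_smul, smul_smul]
    congr 1
    · congr 1
      push_cast
      field_simp
    · rw [← algebraMap_smul ℂ (y * r dh / (2 * Real.pi)), Complex.coe_algebraMap]
      congr 1
      push_cast
      field_simp
  · rw [if_neg ht]
    have htC : (t : ℂ) ≠ 0 := Complex.ofReal_ne_zero.mpr ht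
    set R := r dh
    set b : ℝ := t * dh * x * y + 2 * x * s with hb
    have e1 : Complex.exp ((Real.pi : ℂ) * Complex.I *
        ((t ^ 2 * dh * x * y + 2 * t * x * s : ℝ) : ℂ)) =
        1 + ((Real.pi : ℂ) * Complex.I * ((t * b : ℝ) : ℂ)) * PhiAux ((Real.pi : ℂ) * Complex.I * ((t * b : ℝ) : ℂ)) := by
      have harg : (t ^ 2 * dh * x * y + 2 * t * x * s : ℝ) = t * b := by rw [hb]; ring
      rw [harg]
      linear_combination -PhiAux_spec ((Real.pi : ℂ) * Complex.I * ((t * b : ℝ) : ℂ))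
    have e2 : ξ (R * (s + dh * t * y)) - ξ (R * s) =
        ((R * (dh * t * y) : ℝ) : ℂ) • PsiAux (⇑ξ) (R * s, R * (dh * t * y)) := by
      calc ξ (R * (s + dh * t * y)) - ξ (R * s)
          = ξ (R * s + R * (dh * t * y)) - ξ (R * s) := by
            rw [show R * (s + dh * t * y) = R * s + R * (dh * t * y) by ring]
        _ = (R * (dh * t * y)) • PsiAux (⇑ξ) (R * s, R * (dh * t * y)) :=
            (PsiAux_spec (⇑ξ) hξ1 _ _).symm
        _ = ((R * (dh * t * y) : ℝ) : ℂ) • PsiAux (⇑ξ) (R * s, R * (dh * t * y)) :=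
            (algebraMap_smul ℂ (R * (dh * t * y)) _).symm
    have e3 : (1 + ((Real.pi : ℂ) * Complex.I * ((t * b : ℝ) : ℂ)) * PhiAux ((Real.pi : ℂ) * Complex.I * ((t * b : ℝ) : ℂ))) • ξ (R * (s + dh * t * y)) - ξ (R * s) =
        (((Real.pi : ℂ) * Complex.I * ((t * b : ℝ) : ℂ)) * PhiAux ((Real.pi : ℂ) * Complex.I * ((t * b : ℝ) : ℂ))) • ξ (R * (s + dh * t * y)) +
          (ξ (R * (s + dh * t * y)) - ξ (R * s)) := by
      rw [add_smul, one_smul]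
      abel
    rw [e1, e3, e2]
    simp only [smul_add, smul_smul]
    congr 1
    · congr 1
      push_cast
      field_simp
    · congr 1
      push_cast
      field_simp
end
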